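/- Let G' have degree d' and 2d'+2 vertices and satisfy Property R* with involution f. For any vertex x, let X be the set of f-pairs {y, f(y)} both of whose elements are neighbors of x, and X_f the set of f-pairs both of whose elements are neighbors of f(x). Then X and X_f are disjoint and have the same cardinality. -/

import Mathlib

open SimpleGraph

/-- Property R*: `E(G') ∪ f(E(G')) ∪ {(x', f x') : x' ∈ V(G')}` is the edge set of
the complete graph on `V(G')`. -/
def PropertyRStar {β : Type*} (G' : SimpleGraph β) (f : β → β) : Prop :=
  ∀ x y : β, x ≠ y → (G'.Adj x y ∨ G'.Adj (f x) (f y) ∨ y = f x)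

/-- For an `f`-closed set `S`, the set of `f`-pairs with both elements in `S`
has half the cardinality of `S`. -/
lemma two_mul_pair_ncard {β : Type*} [Fintype β] (f : β → β)
    (hf : Function.Involutive f) (hfp : ∀ v : β, f v ≠ v) (S : Set β)
    (hS : ∀ y ∈ S, f y ∈ S) :
    S.ncard = 2 * {p : Sym2 β | ∃ y, p = s(y, f y) ∧ y ∈ S}.ncard := by
  classical
  have hfin : S.Finite := S.toFinite
  set s : Finset β := hfin.toFinset with hs
  have hmemS : ∀ y, y ∈ s ↔ y ∈ S := fun y => hfin.mem_toFinset
  set g : β → Sym2 β := fun y => s(y, f y) with hg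
  have hTset : {p : Sym2 β | ∃ y, p = s(y, f y) ∧ y ∈ S} = ↑(s.image g) := by
    ext p
    simp only [Set.mem_setOf_eq, Finset.coe_image, Set.mem_image, Finset.mem_coe, hmemS]
    constructor
    · rintro ⟨y, hp, hy⟩; exact ⟨y, hy, hp.symm⟩
    · rintro ⟨y, hy, hp⟩; exact ⟨y, hp.symm, hy⟩
  have hcards : s.card = ∑ p ∈ s.image g, (s.filter (fun y => g y = p)).card :=
    Finset.card_eq_sum_card_fiberwise (fun y hy => Finset.mem_image_of_mem g hy)
  have hfiber : ∀ p ∈ s.image g, (s.filter (fun y => g y = p)).card = 2 := by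
    intro p hp
    obtain ⟨y0, hy0, hpy0⟩ := Finset.mem_image.mp hp
    have hfilter : s.filter (fun y => g y = p) = {y0, f y0} := by
      ext y
      simp only [Finset.mem_filter, Finset.mem_insert, Finset.mem_singleton]
      constructor
      · rintro ⟨hy, hgy⟩
        have : s(y, f y) = s(y0, f y0) := hgy.trans hpy0.symm
        rw [Sym2.eq_iff] at this
        rcases this with ⟨h1, _⟩ | ⟨h1, _⟩
        · exact Or.inl h1
        · exact Or.inr h1
      · rintro (rfl | rfl)
        · exact ⟨hy0, hpy0⟩
        · refine ⟨?_, ?_⟩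
          · rw [hmemS] at hy0 ⊢; exact hS y0 hy0
          · show s(f y0, f (f y0)) = p
            rw [← hpy0, hf y0]
            exact Sym2.eq_swap
    rw [hfilter]
    rw [Finset.card_insert_of_notMem
        (fun h => hfp y0 ((Finset.mem_singleton.mp h).symm)),
      Finset.card_singleton]
  have hsum : s.card = 2 * (s.image g).card := by
    rw [hcards, Finset.sum_congr rfl hfiber, Finset.sum_const, smul_eq_mul, mul_comm]
  rw [hTset, Set.ncard_coe_finset, Set.ncard_eq_toFinset_card' S]
  rw [← hsum]
  congr 1
  ext y
  simp [hmemS]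

-- Counting lemma: the set of "fully non-adjacent" vertices has cardinality equal to
-- that of the "fully adjacent" vertices plus twice the indicator of `Adj v (f v)`.
open Classical in
lemma count_lemma {β : Type*} [Fintype β] (G' : SimpleGraph β) (f : β → β)
    (hf : Function.Involutive f) (hfp : ∀ v : β, f v ≠ v) (d' : ℕ)
    (hreg : ∀ v : β, (G'.neighborSet v).ncard = d')
    (hcard : Fintype.card β = 2 * d' + 2) (v : β) :
    {y | y ≠ v ∧ y ≠ f v ∧ ¬G'.Adj v y ∧ ¬G'.Adj v (f y)}.ncard
      = {y | G'.Adj v y ∧ G'.Adj v (f y)}.ncard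
        + 2 * (if G'.Adj v (f v) then 1 else 0) := by
  classical
  set A : Set β := {y | G'.Adj v y ∧ G'.Adj v (f y)} with hA
  set M1 : Set β := {y | y ≠ f v ∧ G'.Adj v y ∧ ¬G'.Adj v (f y)} with hM1
  set M2 : Set β := {y | y ≠ v ∧ ¬G'.Adj v y ∧ G'.Adj v (f y)} with hM2
  set C : Set β := {y | y ≠ v ∧ y ≠ f v ∧ ¬G'.Adj v y ∧ ¬G'.Adj v (f y)} with hC
  set E : Set β := {y | y = f v ∧ G'.Adj v y} with hE
  set W : Set β := {y | y ≠ v ∧ y ≠ f v} with hW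
  have hvne : v ≠ f v := fun h => hfp v h.symm
  -- v = f (f v), so Adj v (f (f v)) is Adj v v which is false
  have hffv : f (f v) = v := hf v
  -- basic membership facts
  have hfvA : f v ∉ A := by
    intro h
    rw [hA, Set.mem_setOf_eq, hffv] at h
    exact G'.loopless.irrefl v h.2
  -- cardinality of W
  have hWcompl : W = ({v, f v} : Set β)ᶜ := by
    ext y
    simp [hW, not_or]
  have hWcard : W.ncard + 2 = 2 * d' + 2 := by
    have h1 : ({v, f v} : Set β).ncard + ({v, f v} : Set β)ᶜ.ncard = Nat.card β :=
      Set.ncard_add_ncard_compl _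
    rw [Set.ncard_pair hvne] at h1
    rw [hWcompl]
    rw [Nat.card_eq_fintype_card, hcard] at h1
    omega
  -- neighbor set decomposition
  have hNdecomp : G'.neighborSet v = A ∪ M1 ∪ E := by
    ext y
    simp only [mem_neighborSet, hA, hM1, hE, Set.mem_union, Set.mem_setOf_eq]
    constructor
    · intro hadj
      by_cases hy : G'.Adj v (f y)
      · exact Or.inl (Or.inl ⟨hadj, hy⟩)
      · by_cases hyv : y = f v
        · exact Or.inr ⟨hyv, hadj⟩
        · exact Or.inl (Or.inr ⟨hyv, hadj, hy⟩)
    · rintro ((⟨h, _⟩ | ⟨_, h, _⟩) | ⟨_, h⟩) <;> exact h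
  have hdisj1 : Disjoint A M1 := by
    rw [Set.disjoint_left]
    rintro y ⟨_, h2⟩ ⟨_, _, h3⟩
    exact h3 h2
  have hdisj2 : Disjoint (A ∪ M1) E := by
    rw [Set.disjoint_left]
    rintro y (⟨h1, h2⟩ | ⟨h1, _, _⟩) ⟨rfl, _⟩
    · rw [hffv] at h2; exact G'.loopless.irrefl v h2
    · exact h1 rfl
  have hEcard : E.ncard = if G'.Adj v (f v) then 1 else 0 := by
    by_cases he : G'.Adj v (f v)
    · have : E = {f v} := by
        ext y; simp only [hE, Set.mem_setOf_eq, Set.mem_singleton_iff]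
        constructor
        · rintro ⟨h, _⟩; exact h
        · rintro rfl; exact ⟨rfl, he⟩
      rw [this, if_pos he, Set.ncard_singleton]
    · have : E = ∅ := by
        ext y; simp only [hE, Set.mem_setOf_eq, Set.mem_empty_iff_false, iff_false, not_and]
        rintro rfl; exact he
      rw [this, if_neg he, Set.ncard_empty]
  have hNcard : A.ncard + M1.ncard + E.ncard = d' := by
    have := hreg v
    rw [hNdecomp] at this
    rw [Set.ncard_union_eq hdisj2 ((A ∪ M1).toFinite) E.toFinite,
      Set.ncard_union_eq hdisj1 A.toFinite M1.toFinite] at this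
    omega
  -- M2 = f '' M1
  have hM2img : M2 = f '' M1 := by
    ext z
    simp only [hM2, hM1, Set.mem_setOf_eq, Set.mem_image]
    constructor
    · rintro ⟨h1, h2, h3⟩
      refine ⟨f z, ⟨fun h => h1 (by rw [← hf z, h, hf v]), h3, by rw [hf z]; exact h2⟩, hf z⟩
    · rintro ⟨y, ⟨h1, h2, h3⟩, rfl⟩
      exact ⟨fun h => h1 (by rw [← h, hf y]), h3, by rw [hf y]; exact h2⟩
  have hM2card : M2.ncard = M1.ncard := by
    rw [hM2img, Set.ncard_image_of_injective _ hf.injective]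
  -- W decomposition
  have hWdecomp : W = A ∪ M1 ∪ M2 ∪ C := by
    ext y
    simp only [hW, hA, hM1, hM2, hC, Set.mem_union, Set.mem_setOf_eq]
    constructor
    · rintro ⟨h1, h2⟩
      by_cases ha : G'.Adj v y <;> by_cases hb : G'.Adj v (f y)
      · exact Or.inl (Or.inl (Or.inl ⟨ha, hb⟩))
      · exact Or.inl (Or.inl (Or.inr ⟨h2, ha, hb⟩))
      · exact Or.inl (Or.inr ⟨h1, ha, hb⟩)
      · exact Or.inr ⟨h1, h2, ha, hb⟩
    · rintro (((⟨h1, h2⟩ | ⟨h1, h2, _⟩) | ⟨h1, _, h2⟩) | ⟨h1, h2, _, _⟩)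
      · refine ⟨(G'.ne_of_adj h1).symm, fun h => ?_⟩
        rw [h, hffv] at h2
        exact G'.loopless.irrefl v h2
      · exact ⟨(G'.ne_of_adj h2).symm, h1⟩
      · refine ⟨h1, fun h => ?_⟩
        rw [h, hffv] at h2
        exact G'.loopless.irrefl v h2
      · exact ⟨h1, h2⟩
  have hd1 : Disjoint (A ∪ M1) M2 := by
    rw [Set.disjoint_left]
    rintro y (⟨h1, _⟩ | ⟨_, h1, _⟩) ⟨_, h2, _⟩ <;> exact h2 h1
  have hd2 : Disjoint (A ∪ M1 ∪ M2) C := by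
    rw [Set.disjoint_left]
    rintro y ((⟨h1, _⟩ | ⟨_, h1, _⟩) | ⟨_, _, h1⟩) ⟨_, _, h2, h3⟩
    · exact h2 h1
    · exact h2 h1
    · exact h3 h1
  have hWcard2 : A.ncard + M1.ncard + M2.ncard + C.ncard = W.ncard := by
    rw [hWdecomp,
      Set.ncard_union_eq hd2 ((A ∪ M1 ∪ M2).toFinite) C.toFinite,
      Set.ncard_union_eq hd1 ((A ∪ M1).toFinite) M2.toFinite,
      Set.ncard_union_eq hdisj1 A.toFinite M1.toFinite]
  rw [← hEcard]
  omega

/-- Let `G'` be `d'`-regular with `2d' + 2` vertices, satisfying Property R* with a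
fixed-point-free involution `f`.  For any vertex `x`, let `X` be the set of `f`-pairs
`{y, f y}` both of whose elements are neighbors of `x`, and `X_f` the set of `f`-pairs
both of whose elements are neighbors of `f x`.  Then `X` and `X_f` are disjoint and
have the same cardinality. -/
theorem stmt_10 {β : Type*} [Fintype β] (G' : SimpleGraph β) (f : β → β)
    (hf : Function.Involutive f) (hfp : ∀ v : β, f v ≠ v)
    (hR : PropertyRStar G' f) (d' : ℕ)
    (hreg : ∀ v : β, (G'.neighborSet v).ncard = d')
    (hcard : Fintype.card β = 2 * d' + 2) (x : β) :
    Disjoint {p : Sym2 β | ∃ y, p = s(y, f y) ∧ G'.Adj x y ∧ G'.Adj x (f y)}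
        {p : Sym2 β | ∃ y, p = s(y, f y) ∧ G'.Adj (f x) y ∧ G'.Adj (f x) (f y)} ∧
      {p : Sym2 β | ∃ y, p = s(y, f y) ∧ G'.Adj x y ∧ G'.Adj x (f y)}.ncard =
        {p : Sym2 β | ∃ y, p = s(y, f y) ∧ G'.Adj (f x) y ∧ G'.Adj (f x) (f y)}.ncard := by
  classical
  set A : β → Set β := fun v => {y | G'.Adj v y ∧ G'.Adj v (f y)} with hAdef
  set C : β → Set β := fun v =>
    {y | y ≠ v ∧ y ≠ f v ∧ ¬G'.Adj v y ∧ ¬G'.Adj v (f y)} with hCdef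
  have hcount : ∀ v : β, (C v).ncard
      = (A v).ncard + 2 * (if G'.Adj v (f v) then 1 else 0) :=
    fun v => count_lemma G' f hf hfp d' hreg hcard v
  -- inclusion : C v ⊆ A (f v)
  have hincl : ∀ v : β, C v ⊆ A (f v) := by
    intro v y hy
    obtain ⟨h1, h2, h3, h4⟩ := hy
    have hR1 := hR v y (Ne.symm h1)
    have hR2 := hR v (f y) (fun h => h2 (by rw [h, hf y]))
    simp only [hf y] at hR2
    have hadj1 : G'.Adj (f v) (f y) := by
      rcases hR1 with h | h | h
      · exact absurd h h3
      · exact h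
      · exact absurd h h2
    have hadj2 : G'.Adj (f v) y := by
      rcases hR2 with h | h | h
      · exact absurd h h4
      · exact h
      · exact absurd (by rw [h, hf v] : f (f y) = v) (by rw [hf y]; exact h1)
    exact ⟨hadj2, hadj1⟩
  -- the two counting equations
  have he_symm : G'.Adj (f x) (f (f x)) ↔ G'.Adj x (f x) := by
    rw [hf x, adj_comm]
  have hCx := hcount x
  have hCfx := hcount (f x)
  rw [if_congr he_symm rfl rfl] at hCfx
  have hle1 : (C x).ncard ≤ (A (f x)).ncard :=
    Set.ncard_le_ncard (hincl x) (A (f x)).toFinite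
  have hle2 : (C (f x)).ncard ≤ (A x).ncard := by
    have := Set.ncard_le_ncard (hincl (f x)) (A (f (f x))).toFinite
    rwa [hf x] at this
  have heq : (A x).ncard = (A (f x)).ncard ∧ (C x).ncard = (A (f x)).ncard := by
    by_cases he : G'.Adj x (f x) <;> simp only [he, if_true, if_false] at hCx hCfx <;> omega
  -- C x = A (f x)
  have hCA : C x = A (f x) :=
    Set.eq_of_subset_of_ncard_le (hincl x) (le_of_eq heq.2.symm) (A (f x)).toFinite
  -- closure of A under f
  have hAclosed : ∀ v, ∀ y ∈ A v, f y ∈ A v := by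
    rintro v y ⟨h1, h2⟩
    exact ⟨h2, by rw [hf y]; exact h1⟩
  constructor
  · rw [Set.disjoint_left]
    rintro p ⟨y, rfl, hy1, hy2⟩ ⟨z, hpz, hz1, hz2⟩
    have hzC : z ∈ C x := by rw [hCA]; exact ⟨hz1, hz2⟩
    have hfzC : f z ∈ C x := by
      rw [hCA]; exact hAclosed (f x) z (by rw [← hCA]; exact hzC)
    rw [Sym2.eq_iff] at hpz
    rcases hpz with ⟨rfl, _⟩ | ⟨rfl, _⟩
    · exact hzC.2.2.1 hy1
    · exact hfzC.2.2.1 hy1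
  · have hX : {p : Sym2 β | ∃ y, p = s(y, f y) ∧ G'.Adj x y ∧ G'.Adj x (f y)}
        = {p : Sym2 β | ∃ y, p = s(y, f y) ∧ y ∈ A x} := rfl
    have hXf : {p : Sym2 β | ∃ y, p = s(y, f y) ∧ G'.Adj (f x) y ∧ G'.Adj (f x) (f y)}
        = {p : Sym2 β | ∃ y, p = s(y, f y) ∧ y ∈ A (f x)} := rfl
    rw [hX, hXf]
    have h1 := two_mul_pair_ncard f hf hfp (A x) (hAclosed x)
    have h2 := two_mul_pair_ncard f hf hfp (A (f x)) (hAclosed (f x))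
    omega
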